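/- Let f be a union-intersection expression, let h be a random hash function such that for any two distinct input elements x ≠ y, Pr[h(x) = h(y)] ≤ 1/N, and define H = f(h(S_1),...,h(S_m)) and S'_i = {x ∈ S_i : h(x) ∈ H}. If x ∈ S_i but x ∉ f(S_1,...,S_m) and x ∈ S'_i, then there exists an input element y ≠ x with h(y) = h(x). Consequently the expected total number of pairs (i, x) with x ∈ S'_i \ f(S_1,...,S_m) is at most n·(n−1)/N, where n is the total size of the inputs counted with multiplicity over leaves. -/

import Mathlib

/-- A union-intersection expression tree on `m` input sets. -/
inductive Expr (m : ℕ) where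
  | leaf : Fin m → Expr m
  | union : Expr m → Expr m → Expr m
  | inter : Expr m → Expr m → Expr m

/-- Bottom-up evaluation of an expression on finite sets. -/
def Expr.evalF {m : ℕ} {U : Type*} [DecidableEq U] (S : Fin m → Finset U) :
    Expr m → Finset U
  | .leaf i => S i
  | .union a b => a.evalF S ∪ b.evalF S
  | .inter a b => a.evalF S ∩ b.evalF S

/-- `ψ(v)`: the maximum possible number of elements of the subexpression,
computed bottom-up: set size at leaves, sum at union nodes, min at
intersection nodes. -/
def Expr.psi {m : ℕ} {U : Type*} [DecidableEq U] (S : Fin m → Finset U) :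
    Expr m → ℕ
  | .leaf i => (S i).card
  | .union a b => a.psi S + b.psi S
  | .inter a b => min (a.psi S) (b.psi S)
/-- The multiset of leaf labels of an expression (with multiplicity). -/
def Expr.leaves {m : ℕ} : Expr m → Multiset (Fin m)
  | .leaf i => {i}
  | .union a b => a.leaves + b.leaves
  | .inter a b => a.leaves + b.leaves

open Finset


lemma Expr.exists_collision {m : ℕ} {U V : Type*} [DecidableEq U] [DecidableEq V]
    (S : Fin m → Finset U) (g : U → V) :
    ∀ (e : Expr m) (x : U), x ∉ e.evalF S →
      g x ∈ e.evalF (fun j => (S j).image g) →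
      ∃ j ∈ e.leaves, ∃ y ∈ S j, y ≠ x ∧ g y = g x := by
  intro e
  induction e with
  | leaf i =>
    intro x hx hgx
    simp only [Expr.evalF] at hx hgx
    obtain ⟨y, hy, hyg⟩ := Finset.mem_image.mp hgx
    exact ⟨i, by simp [Expr.leaves], y, hy, fun hxy => hx (hxy ▸ hy), hyg⟩
  | union a b ha hb =>
    intro x hx hgx
    simp only [Expr.evalF, Finset.mem_union, not_or] at hx hgx
    rcases hgx with hgx | hgx
    · obtain ⟨j, hj, rest⟩ := ha x hx.1 hgx
      exact ⟨j, by simp [Expr.leaves, hj], rest⟩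
    · obtain ⟨j, hj, rest⟩ := hb x hx.2 hgx
      exact ⟨j, by simp [Expr.leaves, hj], rest⟩
  | inter a b ha hb =>
    intro x hx hgx
    simp only [Expr.evalF, Finset.mem_inter, not_and_or] at hx hgx
    rcases hx with hx | hx
    · obtain ⟨j, hj, rest⟩ := ha x hx hgx.1
      exact ⟨j, by simp [Expr.leaves, hj], rest⟩
    · obtain ⟨j, hj, rest⟩ := hb x hx hgx.2
      exact ⟨j, by simp [Expr.leaves, hj], rest⟩

lemma msum_swap {ι Ω M : Type*} [Fintype Ω] [AddCommMonoid M]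
    (L : Multiset ι) (g : Ω → ι → M) :
    ∑ ω : Ω, (L.map (g ω)).sum = (L.map fun i => ∑ ω : Ω, g ω i).sum := by
  induction L using Multiset.induction with
  | empty => simp
  | cons a L ih => simp [Finset.sum_add_distrib, ih]

lemma mcast_sum {ι : Type*} (L : Multiset ι) (f : ι → ℕ) :
    (((L.map f).sum : ℕ) : ℝ) = (L.map fun i => (f i : ℝ)).sum := by
  induction L using Multiset.induction with
  | empty => simp
  | cons a L ih => simp [ih]

lemma msum_mul {ι : Type*} (L : Multiset ι) (f : ι → ℝ) (c : ℝ) :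
    (L.map fun i => f i * c).sum = (L.map f).sum * c := by
  induction L using Multiset.induction with
  | empty => simp
  | cons a L ih => simp [ih, add_mul]

/-- If `x ∈ Sᵢ` survives the filtering by `H = f(h(S₁),…,h(Sₘ))` although
`x` is not in the result, then some other input element collides with `x`
under `h`; consequently, if any two distinct elements collide with
probability at most `1/N`, the expected total number of pairs `(i, x)` with
`x ∈ S'ᵢ \ f(S₁,…,Sₘ)` is at most `n(n−1)/N`, where `n` is the total input
size counted with multiplicity over the leaves. -/
theorem filtered_survivors_bound {m : ℕ} {U V Ω : Type*} [DecidableEq U]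
    [DecidableEq V] [Fintype Ω] [Nonempty Ω]
    (e : Expr m) (S : Fin m → Finset U) (h : Ω → U → V) (N : ℕ) (hN : 0 < N)
    (hcol : ∀ x y : U, x ≠ y →
      (((univ : Finset Ω).filter fun ω => h ω x = h ω y).card : ℝ)
          / Fintype.card Ω ≤ 1 / (N : ℝ)) :
    (∀ (ω : Ω) (i : Fin m) (x : U), x ∈ S i → x ∉ e.evalF S →
        h ω x ∈ e.evalF (fun j => (S j).image (h ω)) →
        ∃ (j : Fin m) (y : U), y ∈ S j ∧ y ≠ x ∧ h ω y = h ω x) ∧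
    (∀ n : ℕ, n = ((e.leaves.map fun i => (S i).card).sum) →
      (∑ ω : Ω, ((e.leaves.map fun i =>
            ((S i).filter fun x =>
              h ω x ∈ e.evalF (fun j => (S j).image (h ω)) ∧
                x ∉ e.evalF S).card).sum : ℝ)) / Fintype.card Ω
        ≤ (n : ℝ) * ((n : ℝ) - 1) / (N : ℝ)) := by
  constructor
  · intro ω i x _ hxe hgx
    obtain ⟨j, _, y, hy, hyx, hc⟩ := Expr.exists_collision S (h ω) e x hxe hgx
    exact ⟨j, y, hy, hyx, hc⟩
  · intro n hn
    set L := e.leaves with hL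
    have hΩ : (0 : ℝ) < Fintype.card Ω := by
      exact_mod_cast Fintype.card_pos
    have hNr : (0 : ℝ) < N := by exact_mod_cast hN
    set K : ℝ := (Fintype.card Ω : ℝ) / N with hK
    have hK0 : 0 ≤ K := le_of_lt (div_pos hΩ hNr)
    -- collision count bound
    have hCnt : ∀ x y : U, y ≠ x →
        ((((univ : Finset Ω).filter fun ω => h ω y = h ω x).card : ℕ) : ℝ) ≤ K := by
      intro x y hne
      have h1 := hcol y x hne
      rw [div_le_div_iff₀ hΩ hNr] at h1
      rw [hK, le_div_iff₀ hNr]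
      linarith
    -- the key counting bound in ℕ
    have key : ∑ ω : Ω, (L.map fun i =>
          ((S i).filter fun x =>
            h ω x ∈ e.evalF (fun j => (S j).image (h ω)) ∧ x ∉ e.evalF S).card).sum
        ≤ (L.map fun i => ∑ x ∈ S i, (L.map fun j => ∑ y ∈ (S j).erase x,
            ((univ : Finset Ω).filter fun ω => h ω y = h ω x).card).sum).sum := by
      rw [msum_swap]
      refine Multiset.sum_map_le_sum_map _ _ fun i _ => ?_
      have step1 : ∀ ω : Ω, ((S i).filter fun x =>
            h ω x ∈ e.evalF (fun j => (S j).image (h ω)) ∧ x ∉ e.evalF S).card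
          = ∑ x ∈ S i, if (h ω x ∈ e.evalF (fun j => (S j).image (h ω)) ∧ x ∉ e.evalF S)
              then 1 else 0 := fun ω => Finset.card_filter _ _
      calc ∑ ω : Ω, ((S i).filter fun x =>
            h ω x ∈ e.evalF (fun j => (S j).image (h ω)) ∧ x ∉ e.evalF S).card
          = ∑ x ∈ S i, ∑ ω : Ω,
              if (h ω x ∈ e.evalF (fun j => (S j).image (h ω)) ∧ x ∉ e.evalF S)
              then 1 else 0 := by
            simp only [step1]; exact Finset.sum_comm
        _ ≤ ∑ x ∈ S i, (L.map fun j => ∑ y ∈ (S j).erase x,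
              ((univ : Finset Ω).filter fun ω => h ω y = h ω x).card).sum := by
            refine Finset.sum_le_sum fun x _ => ?_
            have ptwise : ∀ ω : Ω,
                (if (h ω x ∈ e.evalF (fun j => (S j).image (h ω)) ∧ x ∉ e.evalF S)
                then 1 else 0)
                ≤ (L.map fun j => ∑ y ∈ (S j).erase x,
                    if h ω y = h ω x then 1 else 0).sum := by
              intro ω
              by_cases hb : (h ω x ∈ e.evalF (fun j => (S j).image (h ω)) ∧ x ∉ e.evalF S)
              · obtain ⟨j, hjL, y, hy, hyx, hc⟩ :=
                  Expr.exists_collision S (h ω) e x hb.2 hb.1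
                simp only [hb, if_true]
                have h1 : 1 ≤ ∑ y' ∈ (S j).erase x, if h ω y' = h ω x then 1 else 0 := by
                  have := Finset.single_le_sum
                    (f := fun y' => if h ω y' = h ω x then (1:ℕ) else 0)
                    (fun _ _ => Nat.zero_le _) (Finset.mem_erase.mpr ⟨hyx, hy⟩)
                  simpa [hc] using this
                refine h1.trans (Multiset.single_le_sum (fun _ _ => Nat.zero_le _) _ ?_)
                exact Multiset.mem_map_of_mem _ hjL
              · simp [hb]
            calc ∑ ω : Ω, (if (h ω x ∈ e.evalF (fun j => (S j).image (h ω)) ∧ x ∉ e.evalF S)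
                  then 1 else 0)
                ≤ ∑ ω : Ω, (L.map fun j => ∑ y ∈ (S j).erase x,
                    if h ω y = h ω x then 1 else 0).sum :=
                  Finset.sum_le_sum fun ω _ => ptwise ω
              _ = (L.map fun j => ∑ y ∈ (S j).erase x,
                    ((univ : Finset Ω).filter fun ω => h ω y = h ω x).card).sum := by
                  rw [msum_swap]
                  refine congrArg Multiset.sum (Multiset.map_congr rfl fun j _ => ?_)
                  rw [Finset.sum_comm]
                  exact Finset.sum_congr rfl fun y _ => (Finset.card_filter _ _).symm
    -- per-element leaf-count bound in ℕ
    have hcnt : ∀ i ∈ L, ∀ x ∈ S i,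
        (L.map fun j => ((S j).erase x).card).sum + 1 ≤ n := by
      intro i hiL x hx
      have hdecomp : i ::ₘ L.erase i = L := Multiset.cons_erase hiL
      rw [hn, ← hdecomp]
      simp only [Multiset.map_cons, Multiset.sum_cons]
      have h1 : ((S i).erase x).card + 1 = (S i).card := Finset.card_erase_add_one hx
      have h2 : ((L.erase i).map fun j => ((S j).erase x).card).sum
          ≤ ((L.erase i).map fun j => (S j).card).sum :=
        Multiset.sum_map_le_sum_map _ _ fun j _ => Finset.card_le_card (Finset.erase_subset _ _)
      omega
    -- move to ℝ
    rw [div_le_div_iff₀ hΩ hNr]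
    have cast_eq : ∀ i : Fin m, ((∑ x ∈ S i, (L.map fun j => ∑ y ∈ (S j).erase x,
          ((univ : Finset Ω).filter fun ω => h ω y = h ω x).card).sum : ℕ) : ℝ)
        = ∑ x ∈ S i, (L.map fun j => ∑ y ∈ (S j).erase x,
            (((univ : Finset Ω).filter fun ω => h ω y = h ω x).card : ℝ)).sum := by
      intro i
      rw [Nat.cast_sum]
      refine Finset.sum_congr rfl fun x _ => ?_
      rw [mcast_sum]
      refine congrArg Multiset.sum (Multiset.map_congr rfl fun j _ => ?_)
      rw [Nat.cast_sum]
    have hnL : (L.map fun i => ((S i).card : ℝ)).sum = (n : ℝ) := by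
      rw [← mcast_sum, ← hn]
    calc (∑ ω : Ω, ((L.map fun i =>
            ((S i).filter fun x =>
              h ω x ∈ e.evalF (fun j => (S j).image (h ω)) ∧
                x ∉ e.evalF S).card).sum : ℝ)) * N
        = ((∑ ω : Ω, (L.map fun i =>
            ((S i).filter fun x =>
              h ω x ∈ e.evalF (fun j => (S j).image (h ω)) ∧
                x ∉ e.evalF S).card).sum : ℕ) : ℝ) * N := by
          rw [Nat.cast_sum]
      _ ≤ ((L.map fun i => ∑ x ∈ S i, (L.map fun j => ∑ y ∈ (S j).erase x,
            ((univ : Finset Ω).filter fun ω => h ω y = h ω x).card).sum).sum : ℕ) * (N:ℝ) := by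
          exact mul_le_mul_of_nonneg_right (Nat.cast_le.mpr key) (le_of_lt hNr)
      _ ≤ ((n : ℝ) * (((n : ℝ) - 1) * K)) * N := by
          refine mul_le_mul_of_nonneg_right ?_ (le_of_lt hNr)
          rw [mcast_sum]
          calc (L.map fun i => ((∑ x ∈ S i, (L.map fun j => ∑ y ∈ (S j).erase x,
                  ((univ : Finset Ω).filter fun ω => h ω y = h ω x).card).sum : ℕ) : ℝ)).sum
              ≤ (L.map fun i => ((S i).card : ℝ) * (((n : ℝ) - 1) * K)).sum := by
                refine Multiset.sum_map_le_sum_map _ _ fun i hiL => ?_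
                rw [cast_eq i]
                calc ∑ x ∈ S i, (L.map fun j => ∑ y ∈ (S j).erase x,
                      (((univ : Finset Ω).filter fun ω => h ω y = h ω x).card : ℝ)).sum
                    ≤ ∑ _x ∈ S i, ((n : ℝ) - 1) * K := by
                      refine Finset.sum_le_sum fun x hx => ?_
                      calc (L.map fun j => ∑ y ∈ (S j).erase x,
                            (((univ : Finset Ω).filter fun ω => h ω y = h ω x).card : ℝ)).sum
                          ≤ (L.map fun j => (((S j).erase x).card : ℝ) * K).sum := by
                            refine Multiset.sum_map_le_sum_map _ _ fun j _ => ?_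
                            have := Finset.sum_le_card_nsmul ((S j).erase x)
                              (fun y => (((univ : Finset Ω).filter fun ω =>
                                h ω y = h ω x).card : ℝ)) K
                              (fun y hy => hCnt x y (Finset.mem_erase.mp hy).1)
                            simpa [nsmul_eq_mul] using this
                        _ = (L.map fun j => (((S j).erase x).card : ℝ)).sum * K := msum_mul _ _ _
                        _ ≤ ((n : ℝ) - 1) * K := by
                            refine mul_le_mul_of_nonneg_right ?_ hK0
                            have := hcnt i hiL x hx
                            have hc : (((L.map fun j => ((S j).erase x).card).sum : ℕ) : ℝ) + 1
                                ≤ (n : ℝ) := by exact_mod_cast this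
                            rw [mcast_sum] at hc
                            linarith
                  _ = ((S i).card : ℝ) * (((n : ℝ) - 1) * K) := by
                      rw [Finset.sum_const, nsmul_eq_mul]
            _ = (L.map fun i => ((S i).card : ℝ)).sum * (((n : ℝ) - 1) * K) :=
                msum_mul _ _ _
            _ = (n : ℝ) * (((n : ℝ) - 1) * K) := by rw [hnL]
      _ = (n : ℝ) * ((n : ℝ) - 1) * Fintype.card Ω := by
          have hN0 : (N : ℝ) ≠ 0 := ne_of_gt hNr
          rw [hK]; field_simp
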